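/- Let X ⊆ A^ℤ be a transitive subshift and let μ be an S-invariant Borel probability measure on X. For n ≥ 1 let d(μ, n) be the dimension of the ℚ-vector space spanned by { μ([u]) : u ∈ L_n(X) } ⊆ ℝ, and let |K_{n−1}| be the total number of connected components of the extension graphs Γ_X(u) over all u ∈ L_{n−1}(X). Then for each n ≥ 1, d(μ, n) ≤ p_X(n) − |K_{n−1}| + 1. -/

import Mathlib

open Filter Topology MeasureTheory

namespace SAdicPaper

variable {A B : Type*}

/-! ### Basic symbolic dynamics on the full shift `ℤ → A` -/

/-- The shift map `S` on the full shift. -/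
def shift (x : ℤ → A) : ℤ → A := fun n => x (n + 1)

/-- The iterate `S^k` of the shift, for `k : ℤ`. -/
def shiftIter (k : ℤ) (x : ℤ → A) : ℤ → A := fun n => x (n + k)

/-- The finite word `x_i x_{i+1} ⋯ x_{i+l-1}`. -/
def window (x : ℤ → A) (i : ℤ) (l : ℕ) : List A :=
  (List.range l).map fun k => x (i + (k : ℤ))

/-- A subshift: a closed shift-invariant subset of the full shift. -/
def IsSubshift [TopologicalSpace A] (X : Set (ℤ → A)) : Prop :=
  IsClosed X ∧ shift '' X = X

/-- The language of a set of bi-infinite sequences: all finite factors of its points. -/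
def langOf (X : Set (ℤ → A)) : Set (List A) :=
  {w | ∃ x ∈ X, ∃ i : ℤ, w = window x i w.length}

/-- The (two-sided) orbit of a point under the shift. -/
def orbit (x : ℤ → A) : Set (ℤ → A) := Set.range fun k : ℤ => shiftIter k x

/-- A minimal subshift: nonempty and every orbit is dense. -/
def IsMinimalSubshift [TopologicalSpace A] (X : Set (ℤ → A)) : Prop :=
  IsSubshift X ∧ X.Nonempty ∧ ∀ x ∈ X, X ⊆ closure (orbit x)

/-- A transitive subshift: some orbit is dense. -/
def IsTransitiveSubshift [TopologicalSpace A] (X : Set (ℤ → A)) : Prop :=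
  IsSubshift X ∧ ∃ x ∈ X, X ⊆ closure (orbit x)

/-- `α` is a continuous additive eigenvalue of `(X, S)`: there is a continuous
`g : X → ℝ/ℤ` with `g (S x) = g x + α (mod ℤ)`. -/
def IsEigenvalue [TopologicalSpace A] (X : Set (ℤ → A)) (α : ℝ) : Prop :=
  ∃ g : (ℤ → A) → AddCircle (1 : ℝ), ContinuousOn g X ∧
    ∀ x ∈ X, g (shift x) = g x + (α : AddCircle (1 : ℝ))

/-- `‖x‖`: distance from a real number to the nearest integer. -/
noncomputable def dnint (x : ℝ) : ℝ := |x - round x|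

/-- `{x}`: the centered fractional part, the unique element of `[-1/2, 1/2)`
such that `x + {x}` is an integer. -/
noncomputable def cfrac (x : ℝ) : ℝ := (⌈x - 1 / 2⌉ : ℤ) - x

/-- The cylinder `[u] = {x ∈ X : x_{[0,|u|)} = u}`. -/
def cyl (X : Set (ℤ → A)) (u : List A) : Set (ℤ → A) :=
  {x ∈ X | window x 0 u.length = u}

/-- The factor complexity `p_X(n)`. -/
noncomputable def pcomplex (X : Set (ℤ → A)) (n : ℕ) : ℕ :=
  Set.ncard {w : List A | w ∈ langOf X ∧ w.length = n}

/-! ### Letter-coboundaries -/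

/-- The extension of a map `c : A → ℝ` to the monoid morphism `A* → (ℝ, +)`. -/
def wsum (c : A → ℝ) (w : List A) : ℝ := (w.map c).sum

/-- `w` is a return word to the letter `a` in `X`: `w ++ [a] ∈ L(X)` and `w ++ [a]`
contains exactly two occurrences of `a`, one as a prefix and one as a suffix. -/
def IsReturnWord (X : Set (ℤ → A)) (a : A) (w : List A) : Prop :=
  w ++ [a] ∈ langOf X ∧ w.head? = some a ∧
    ∀ (i : ℕ) (h : i < w.length), 0 < i → w.get ⟨i, h⟩ ≠ a

/-- A letter-coboundary on `X` (identified with its values on letters):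
a morphism `A* → (ℝ, +)` vanishing on all return words to letters. -/
def IsLetterCoboundary (X : Set (ℤ → A)) (c : A → ℝ) : Prop :=
  ∀ (a : A) (w : List A), IsReturnWord X a w → wsum c w = 0

/-- `w` is a return word to the (nonempty) word `u` in `X`. -/
def IsReturnWordTo (X : Set (ℤ → A)) (u w : List A) : Prop :=
  w ≠ [] ∧ (w ++ u) ∈ langOf X ∧ u <+: (w ++ u) ∧
    ∀ i : ℕ, ((w ++ u).drop i).take u.length = u → i + u.length ≤ (w ++ u).length →
      i = 0 ∨ i = w.length

/-! ### Extension graphs -/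

/-- Vertices of the extension graph of `w`: two copies of the alphabet, restricted to the
letters that extend `w` on the corresponding side. -/
def extVertex (X : Set (ℤ → A)) (w : List A) : A ⊕ A → Prop
  | Sum.inl a => (a :: w) ∈ langOf X
  | Sum.inr b => (w ++ [b]) ∈ langOf X

/-- The edge relation of the extension graph: `a_L — b_R` when `a w b ∈ L(X)`. -/
def extAdjRaw (X : Set (ℤ → A)) (w : List A) (u v : A ⊕ A) : Prop :=
  ∃ a b, u = Sum.inl a ∧ v = Sum.inr b ∧ (a :: (w ++ [b])) ∈ langOf X

/-- The extension graph `Γ_X(w)` of a word `w` in `X`. -/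
def extGraph (X : Set (ℤ → A)) (w : List A) :
    SimpleGraph {v : A ⊕ A // extVertex X w v} where
  Adj u v := extAdjRaw X w u.1 v.1 ∨ extAdjRaw X w v.1 u.1
  symm := ⟨fun u v h => Or.symm h⟩
  loopless := ⟨by
    rintro ⟨v, hv⟩ h
    rcases h with ⟨a, b, h1, h2, -⟩ | ⟨a, b, h1, h2, -⟩ <;> (rw [h1] at h2; simp at h2)⟩

/-- The total number of connected components of the extension graphs of all
words of length `m` in `L(X)`. -/
noncomputable def totalComponents (X : Set (ℤ → A)) (m : ℕ) : ℕ :=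
  Nat.card (Σ w : {w : List A // w ∈ langOf X ∧ w.length = m},
    (extGraph X w.1).ConnectedComponent)

/-! ### The vector space of letter-coboundaries -/

lemma wsum_zero (w : List A) : wsum (0 : A → ℝ) w = 0 := by
  induction w with
  | nil => rfl
  | cons a t ih => simp [wsum, List.map_cons, List.sum_cons] at ih ⊢; exact ih

lemma wsum_add (c d : A → ℝ) (w : List A) :
    wsum (c + d) w = wsum c w + wsum d w := by
  induction w with
  | nil => simp [wsum]
  | cons a t ih =>
      simp only [wsum, List.map_cons, List.sum_cons, Pi.add_apply] at ih ⊢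
      rw [ih]; ring

lemma wsum_smul (r : ℝ) (c : A → ℝ) (w : List A) :
    wsum (r • c) w = r * wsum c w := by
  induction w with
  | nil => simp [wsum]
  | cons a t ih =>
      simp only [wsum, List.map_cons, List.sum_cons, Pi.smul_apply, smul_eq_mul] at ih ⊢
      rw [ih]; ring

/-- The `ℝ`-vector space `C_X` of letter-coboundaries on `X`. -/
def cobSpace (X : Set (ℤ → A)) : Submodule ℝ (A → ℝ) where
  carrier := {c | IsLetterCoboundary X c}
  zero_mem' := fun _ w _ => wsum_zero w
  add_mem' := by
    intro c d hc hd a w hw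
    rw [wsum_add, hc a w hw, hd a w hw, add_zero]
  smul_mem' := by
    intro r c hc a w hw
    rw [wsum_smul, hc a w hw, mul_zero]

/-! ### Directive sequences -/

variable {Alph : ℕ → Type*}

/-- `seg τ n k = τ_{n,n+k} = τ_n ∘ τ_{n+1} ∘ ⋯ ∘ τ_{n+k-1}`, applied to a letter. -/
def seg (τ : ∀ n, Alph (n + 1) → List (Alph n)) (n : ℕ) :
    (k : ℕ) → Alph (n + k) → List (Alph n)
  | 0, a => [a]
  | k + 1, a => (τ (n + k) a).flatMap (seg τ n k)

/-- `toZero τ n = τ_{0,n}`, applied to a letter. -/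
def toZero (τ : ∀ n, Alph (n + 1) → List (Alph n)) :
    (n : ℕ) → Alph n → List (Alph 0)
  | 0, a => [a]
  | n + 1, a => (τ n a).flatMap (toZero τ n)

/-- The height `h_n(u) = |τ_{0,n}(u)|` (so `h_0(u) = |u|`). -/
def heightW (τ : ∀ n, Alph (n + 1) → List (Alph n)) (n : ℕ) (u : List (Alph n)) : ℕ :=
  (u.flatMap (toZero τ n)).length

/-- Every `τ_n` is a substitution: non-erasing and letter-onto. -/
def IsDirective (τ : ∀ n, Alph (n + 1) → List (Alph n)) : Prop :=
  ∀ n, (∀ a : Alph (n + 1), τ n a ≠ []) ∧ ∀ b : Alph n, ∃ a : Alph (n + 1), b ∈ τ n a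

/-- The level-`n` language `L^{(n)}_τ`: the words occurring in some `τ_{n,m}(a)`, `m > n`. -/
def levelLang (τ : ∀ n, Alph (n + 1) → List (Alph n)) (n : ℕ) : Set (List (Alph n)) :=
  {w | ∃ k : ℕ, 0 < k ∧ ∃ a : Alph (n + k), w <:+: seg τ n k a}

/-- The level-`n` subshift `X^{(n)}_τ`: the points all of whose factors lie in `L^{(n)}_τ`.
`X_τ = levelShift τ 0`. -/
def levelShift (τ : ∀ n, Alph (n + 1) → List (Alph n)) (n : ℕ) : Set (ℤ → Alph n) :=
  {x | ∀ (i : ℤ) (l : ℕ), window x i l ∈ levelLang τ n}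

/-- Primitivity of a directive sequence. -/
def IsPrimitiveSeq (τ : ∀ n, Alph (n + 1) → List (Alph n)) : Prop :=
  ∀ n, ∃ k, 0 < k ∧ ∀ (a : Alph (n + k)) (b : Alph n), b ∈ seg τ n k a

/-- Positivity of a directive sequence: every letter of `A_n` occurs in every `τ_n(b)`. -/
def IsPositiveSeq (τ : ∀ n, Alph (n + 1) → List (Alph n)) : Prop :=
  ∀ (n : ℕ) (b : Alph (n + 1)) (a : Alph n), a ∈ τ n b

/-- `y` is the image of the bi-infinite sequence `x` under the substitution `σ`,
aligned so that `σ(x_0)` starts at position `0`. -/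
def SubstPoint (σ : B → List A) (x : ℤ → B) (y : ℤ → A) : Prop :=
  ∀ m : ℕ,
    window y (-(∑ t ∈ Finset.range m, ((σ (x (-1 - (t : ℤ)))).length : ℤ)))
        ((window x (-(m : ℤ)) (2 * m + 1)).flatMap σ).length
      = (window x (-(m : ℤ)) (2 * m + 1)).flatMap σ

/-- The base `B_n(a) = {τ_{0,n}(x) : x ∈ X^{(n)}_τ, x_0 = a}` of the Kakutani–Rokhlin tower. -/
def baseSet (τ : ∀ n, Alph (n + 1) → List (Alph n)) (n : ℕ) (a : Alph n) :
    Set (ℤ → Alph 0) :=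
  {y | ∃ x ∈ levelShift τ n, x 0 = a ∧ SubstPoint (toZero τ n) x y}

/-- Recognizability: for every `n ≥ 1`, the sets `S^k B_n(a)`, `a ∈ A_n`,
`0 ≤ k < h_n(a)`, are pairwise disjoint. -/
def IsRecognizable (τ : ∀ n, Alph (n + 1) → List (Alph n)) : Prop :=
  ∀ n : ℕ, 1 ≤ n → ∀ (a a' : Alph n) (k k' : ℕ),
    k < heightW τ n [a] → k' < heightW τ n [a'] → ¬(a = a' ∧ k = k') →
    Disjoint (shiftIter (k : ℤ) '' baseSet τ n a) (shiftIter (k' : ℤ) '' baseSet τ n a')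

/-- `min_{a ∈ A_n} |τ_{0,n}(a)| → ∞`. -/
def IsEverywhereGrowing (τ : ∀ n, Alph (n + 1) → List (Alph n)) : Prop :=
  ∀ N : ℕ, ∃ M : ℕ, ∀ n, M ≤ n → ∀ a : Alph n, N ≤ (toZero τ n a).length

/-- Decisiveness of an everywhere growing directive sequence. -/
def IsDecisive (τ : ∀ n, Alph (n + 1) → List (Alph n)) : Prop :=
  IsEverywhereGrowing τ ∧
  ∀ n : ℕ, ∃ l r : Alph (n + 1) → Alph n,
    ∀ a b : Alph (n + 1), [a, b] ∈ langOf (levelShift τ (n + 1)) →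
      (τ n b).head? = some (r a) ∧ (τ n a).getLast? = some (l b)

/-- Unimodularity: every incidence matrix has determinant `±1`. -/
def IsUnimodularSeq [∀ n, Fintype (Alph n)] [∀ n, DecidableEq (Alph n)]
    (τ : ∀ n, Alph (n + 1) → List (Alph n)) : Prop :=
  ∀ n, ∃ e : Alph n ≃ Alph (n + 1),
    (Matrix.det (Matrix.of fun b a : Alph n => ((τ n (e a)).count b : ℤ))).natAbs = 1

/-! ### Single substitutions -/

/-- Iteration `τ^m` of a substitution on a single alphabet, applied to a letter. -/
def substPow (τ : A → List A) : ℕ → A → List A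
  | 0, a => [a]
  | k + 1, a => (τ a).flatMap (substPow τ k)

/-- The substitutive subshift `X_τ` generated by the constant directive sequence `(τ)`. -/
def substShift (τ : A → List A) : Set (ℤ → A) :=
  {x | ∀ (i : ℤ) (l : ℕ), ∃ m : ℕ, 1 ≤ m ∧ ∃ a : A, window x i l <:+: substPow τ m a}

/-- The incidence matrix of a substitution (with real entries). -/
def incMat [DecidableEq A] (τ : A → List A) : Matrix A A ℝ :=
  Matrix.of fun b a => ((τ a).count b : ℝ)

/-- A primitive substitution: some power of its incidence matrix is strictly positive. -/
def IsPrimitiveSubst [Fintype A] [DecidableEq A] (τ : A → List A) : Prop :=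
  ∃ k : ℕ, 0 < k ∧ ∀ b a : A, 0 < (incMat τ ^ k) b a

/-- Aperiodicity: `X_τ` contains no shift-periodic point. -/
def IsAperiodicSubst (τ : A → List A) : Prop :=
  ∀ x ∈ substShift τ, ∀ p : ℕ, 0 < p → shiftIter (p : ℤ) x ≠ x

/-- The stable space `V_{X_τ}` of row vectors `v` with `v M_τ^n → 0`. -/
def stableSpace [Fintype A] [DecidableEq A] (τ : A → List A) : Submodule ℝ (A → ℝ) where
  carrier := {v | Tendsto (fun n : ℕ => Matrix.vecMul v (incMat τ ^ n)) atTop (nhds 0)}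
  zero_mem' := by
    simp only [Set.mem_setOf_eq, Matrix.zero_vecMul]
    exact tendsto_const_nhds
  add_mem' := by
    intro u v hu hv
    have := hu.add hv
    simp only [Set.mem_setOf_eq] at *
    simpa [Matrix.add_vecMul] using this
  smul_mem' := by
    intro r v hv
    have := hv.const_smul r
    simp only [Set.mem_setOf_eq] at *
    simpa [Matrix.smul_vecMul] using this

/-- `X` is balanced on the letter `a`. -/
def IsBalancedOnLetter [DecidableEq A] (X : Set (ℤ → A)) (a : A) : Prop :=
  ∃ C : ℕ, 0 < C ∧ ∀ w ∈ langOf X, ∀ w' ∈ langOf X, w.length = w'.length →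
    |(w.count a : ℤ) - (w'.count a : ℤ)| ≤ (C : ℤ)

/-- `X` is balanced on letters. -/
def IsBalancedOnLetters [DecidableEq A] (X : Set (ℤ → A)) : Prop :=
  ∀ a : A, IsBalancedOnLetter X a

/-- A function `f : X → ℝ` is balanced on a (minimal) subshift `X`. -/
def IsBalancedFn (X : Set (ℤ → A)) (f : (ℤ → A) → ℝ) : Prop :=
  ∃ C : ℝ, 0 < C ∧ ∀ x ∈ X, ∀ y ∈ X, ∀ n : ℕ, 1 ≤ n →
    |∑ i ∈ Finset.range (n + 1), (f (shiftIter (i : ℤ) x) - f (shiftIter (i : ℤ) y))| ≤ C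

section Lemma61

open SimpleGraph
open scoped Classical

variable {A : Type*}

private lemma flatMap_sing {α β : Type*} (f : α → β) :
    ∀ l : List α, l.flatMap (fun a => [f a]) = l.map f
  | [] => rfl
  | a :: t => by rw [List.flatMap_cons, flatMap_sing f t]; rfl

lemma window_eq_map (x : ℤ → A) (i : ℤ) (l : ℕ) :
    window x i l = (List.range l).map (fun k : ℕ => x (i + (k : ℤ))) := by
  unfold window
  simp only [List.pure_def, List.bind_eq_flatMap]
  rw [flatMap_sing, List.map_map]
  rfl

lemma window_length (x : ℤ → A) (i : ℤ) (l : ℕ) : (window x i l).length = l := by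
  rw [window_eq_map, List.length_map, List.length_range]

lemma window_congr (x y : ℤ → A) (i : ℤ) (l : ℕ)
    (h : ∀ k : ℕ, k < l → x (i + k) = y (i + k)) : window x i l = window y i l := by
  rw [window_eq_map, window_eq_map]
  apply List.map_congr_left
  intro k hk
  exact h k (List.mem_range.mp hk)

lemma window_succ_left (x : ℤ → A) (i : ℤ) (l : ℕ) :
    window x i (l + 1) = x i :: window x (i + 1) l := by
  rw [window_eq_map, window_eq_map,
    List.range_succ_eq_map, List.map_cons, List.map_map, List.cons_eq_cons]
  constructor
  · norm_num
  · apply List.map_congr_left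
    intro k _
    simp only [Function.comp_apply]
    congr 1
    push_cast
    ring

lemma window_succ_right (x : ℤ → A) (i : ℤ) (l : ℕ) :
    window x i (l + 1) = window x i l ++ [x (i + l)] := by
  rw [window_eq_map, window_eq_map, List.range_succ, List.map_append, List.map_singleton]

lemma mem_lang_window {X : Set (ℤ → A)} {x : ℤ → A} (hx : x ∈ X) (i : ℤ) (l : ℕ) :
    window x i l ∈ langOf X := by
  refine ⟨x, hx, i, ?_⟩
  rw [window_length]

lemma lang_cons {X : Set (ℤ → A)} {a : A} {w : List A} (h : (a :: w) ∈ langOf X) :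
    w ∈ langOf X := by
  obtain ⟨x, hx, i, hw⟩ := h
  rw [List.length_cons, window_succ_left] at hw
  rw [List.cons_eq_cons] at hw
  exact ⟨x, hx, i + 1, hw.2⟩

lemma lang_concat {X : Set (ℤ → A)} {w : List A} {b : A} (h : (w ++ [b]) ∈ langOf X) :
    w ∈ langOf X := by
  obtain ⟨x, hx, i, hw⟩ := h
  rw [List.length_append, List.length_singleton, window_succ_right] at hw
  obtain ⟨hw1, -⟩ := List.append_inj' hw rfl
  exact ⟨x, hx, i, hw1⟩

lemma window_shiftIter (x : ℤ → A) (k i : ℤ) (l : ℕ) :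
    window (shiftIter k x) i l = window x (i + k) l := by
  rw [window_eq_map, window_eq_map]
  apply List.map_congr_left
  intro j _
  show x (i + (j : ℤ) + k) = x (i + k + (j : ℤ))
  congr 1
  ring

lemma occurs_in_transitive_point [TopologicalSpace A] [DiscreteTopology A]
    {X : Set (ℤ → A)} {x₀ : ℤ → A} (hd : X ⊆ closure (orbit x₀))
    {w : List A} (hw : w ∈ langOf X) : ∃ i : ℤ, w = window x₀ i w.length := by
  obtain ⟨y, hy, i, hwy⟩ := hw
  set l := w.length with hl
  have hUopen : IsOpen (⋂ k ∈ Finset.range l, {z : ℤ → A | z (i + k) = y (i + k)}) := by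
    refine isOpen_biInter_finset fun k _ => ?_
    have : {z : ℤ → A | z (i + k) = y (i + k)} =
        (fun z : ℤ → A => z (i + (k : ℤ))) ⁻¹' {y (i + k)} := rfl
    rw [this]
    exact (continuous_apply (i + (k : ℤ))).isOpen_preimage _ (isOpen_discrete _)
  have hyU : y ∈ ⋂ k ∈ Finset.range l, {z : ℤ → A | z (i + k) = y (i + k)} := by
    simp
  obtain ⟨z, hzU, hzo⟩ := mem_closure_iff.mp (hd hy) _ hUopen hyU
  obtain ⟨t, rfl⟩ := hzo
  refine ⟨i + t, ?_⟩
  rw [hwy, ← window_shiftIter]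
  apply window_congr
  intro k hk
  have := Set.mem_iInter₂.mp hzU k (Finset.mem_range.mpr hk)
  exact (this : shiftIter t x₀ (i + k) = y (i + k)).symm

set_option linter.unusedSectionVars false

lemma lang_extend_right {X : Set (ℤ → A)} {w : List A} (hw : w ∈ langOf X) :
    ∃ b : A, (w ++ [b]) ∈ langOf X := by
  obtain ⟨x, hx, i, h⟩ := hw
  refine ⟨x (i + w.length), x, hx, i, ?_⟩
  rw [List.length_append, List.length_singleton, window_succ_right, ← h]

lemma shift_inj : Function.Injective (shift : (ℤ → A) → (ℤ → A)) := by
  intro x y h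
  funext n
  have := congrFun h (n - 1)
  simpa [shift] using this

lemma mem_shift_iff {X : Set (ℤ → A)} [TopologicalSpace A] (hX : IsSubshift X) (x : ℤ → A) :
    shift x ∈ X ↔ x ∈ X := by
  constructor
  · intro h
    rw [← hX.2] at h
    obtain ⟨y, hy, hxy⟩ := h
    rwa [← shift_inj hxy]
  · intro h
    rw [← hX.2]
    exact Set.mem_image_of_mem _ h

lemma window_shift (x : ℤ → A) (i : ℤ) (l : ℕ) :
    window (shift x) i l = window x (i + 1) l := by
  exact window_shiftIter x 1 i l

section Meas

variable [TopologicalSpace A] [DiscreteTopology A] [MeasurableSpace A] [BorelSpace A]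

lemma measurableSet_windowEq (l : ℕ) :
    ∀ (i : ℤ) (u : List A), MeasurableSet {x : ℤ → A | window x i l = u} := by
  induction l with
  | zero =>
    intro i u
    cases u with
    | nil =>
      convert MeasurableSet.univ
      ext x
      simp [window_eq_map]
    | cons a t =>
      convert MeasurableSet.empty
      ext x
      simp [window_eq_map]
  | succ l ih =>
    intro i u
    cases u with
    | nil =>
      convert MeasurableSet.empty
      ext x
      simp [window_succ_left]
    | cons a t =>
      have he : {x : ℤ → A | window x i (l+1) = a :: t}
          = {x : ℤ → A | x i = a} ∩ {x : ℤ → A | window x (i+1) l = t} := by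
        ext x
        simp [window_succ_left, List.cons_eq_cons]
      rw [he]
      exact ((measurable_pi_apply i) ((isOpen_discrete ({a} : Set A)).measurableSet)).inter
        (ih (i+1) t)

variable [Fintype A]

lemma measurableSet_cyl {X : Set (ℤ → A)} (hX : IsClosed X) (u : List A) :
    MeasurableSet (cyl X u) := by
  have he : cyl X u = X ∩ {x : ℤ → A | window x 0 u.length = u} := rfl
  rw [he]
  exact hX.measurableSet.inter (measurableSet_windowEq _ _ _)

/-- The real-valued measure of a cylinder. -/
noncomputable def nu (μ : Measure (ℤ → A)) (X : Set (ℤ → A)) (u : List A) : ℝ :=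
  (μ (cyl X u)).toReal

lemma cyl_eq_empty {X : Set (ℤ → A)} {u : List A} (h : u ∉ langOf X) : cyl X u = ∅ := by
  ext x
  simp only [cyl, Set.mem_setOf_eq, Set.mem_empty_iff_false, iff_false, not_and]
  intro hx hw
  exact absurd ⟨x, hx, 0, hw.symm⟩ h

lemma nu_nonlang {X : Set (ℤ → A)} (μ : Measure (ℤ → A)) {u : List A} (h : u ∉ langOf X) :
    nu μ X u = 0 := by
  unfold nu
  rw [cyl_eq_empty h, measure_empty]
  rfl

lemma mem_cyl_concat {X : Set (ℤ → A)} (w : List A) (b : A) (x : ℤ → A) :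
    x ∈ cyl X (w ++ [b]) ↔ x ∈ cyl X w ∧ x (0 + (w.length : ℤ)) = b := by
  simp only [cyl, Set.mem_setOf_eq, List.length_append, List.length_singleton]
  rw [window_succ_right]
  constructor
  · rintro ⟨hx, h⟩
    obtain ⟨h1, h2⟩ := List.append_inj' h rfl
    refine ⟨⟨hx, h1⟩, ?_⟩
    simpa using h2
  · rintro ⟨⟨hx, h1⟩, h2⟩
    rw [h1, h2]
    exact ⟨hx, rfl⟩

lemma nu_concat {X : Set (ℤ → A)} (hX : IsSubshift X)
    (μ : Measure (ℤ → A)) [IsProbabilityMeasure μ] (w : List A) :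
    nu μ X w = ∑ b : A, nu μ X (w ++ [b]) := by
  have hU : cyl X w = ⋃ b ∈ (Finset.univ : Finset A), cyl X (w ++ [b]) := by
    ext x
    simp only [Set.mem_iUnion, Finset.mem_univ, exists_true_left]
    constructor
    · intro hx
      exact ⟨x (0 + (w.length : ℤ)), (mem_cyl_concat w _ x).mpr ⟨hx, rfl⟩⟩
    · rintro ⟨b, hb⟩
      exact ((mem_cyl_concat w b x).mp hb).1
  have hdisj : (↑(Finset.univ : Finset A) : Set A).PairwiseDisjoint
      (fun b => cyl X (w ++ [b])) := by
    intro b _ b' _ hne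
    refine Set.disjoint_left.mpr fun x hxb hxb' => hne ?_
    rw [← ((mem_cyl_concat w b x).mp hxb).2, ← ((mem_cyl_concat w b' x).mp hxb').2]
  have hsum := measure_biUnion_finset (μ := μ) hdisj fun b _ => measurableSet_cyl hX.1 (w ++ [b])
  rw [← hU] at hsum
  unfold nu
  rw [hsum, ENNReal.toReal_sum fun b _ => measure_ne_top μ _]

lemma mem_cyl_cons {X : Set (ℤ → A)} (hX : IsSubshift X) (w : List A) (a : A) (x : ℤ → A) :
    x ∈ cyl X (a :: w) ↔ shift x ∈ cyl X w ∧ x 0 = a := by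
  simp only [cyl, Set.mem_setOf_eq, List.length_cons]
  rw [window_succ_left, List.cons_eq_cons, mem_shift_iff hX, window_shift, zero_add]
  tauto

lemma nu_cons {X : Set (ℤ → A)} (hX : IsSubshift X)
    (μ : Measure (ℤ → A)) [IsProbabilityMeasure μ]
    (hinv : ∀ B : Set (ℤ → A), MeasurableSet B → μ (shift ⁻¹' B) = μ B) (w : List A) :
    nu μ X w = ∑ a : A, nu μ X (a :: w) := by
  have hU : shift ⁻¹' cyl X w = ⋃ a ∈ (Finset.univ : Finset A), cyl X (a :: w) := by
    ext x
    simp only [Set.mem_preimage, Set.mem_iUnion, Finset.mem_univ, exists_true_left]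
    constructor
    · intro hx
      exact ⟨x 0, (mem_cyl_cons hX w _ x).mpr ⟨hx, rfl⟩⟩
    · rintro ⟨a, ha⟩
      exact ((mem_cyl_cons hX w a x).mp ha).1
  have hdisj : (↑(Finset.univ : Finset A) : Set A).PairwiseDisjoint
      (fun a => cyl X (a :: w)) := by
    intro a _ a' _ hne
    refine Set.disjoint_left.mpr fun x hxa hxa' => hne ?_
    rw [← ((mem_cyl_cons hX w a x).mp hxa).2, ← ((mem_cyl_cons hX w a' x).mp hxa').2]
  have hsum := measure_biUnion_finset (μ := μ) hdisj fun a _ => measurableSet_cyl hX.1 (a :: w)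
  rw [← hU, hinv _ (measurableSet_cyl hX.1 w)] at hsum
  unfold nu
  rw [hsum, ENNReal.toReal_sum fun a _ => measure_ne_top μ _]

end Meas
/-! ### Words and components -/

/-- The words of length `l` in the language of `X`. -/
abbrev LW (X : Set (ℤ → A)) (l : ℕ) : Type _ :=
  {w : List A // w ∈ langOf X ∧ w.length = l}

/-- The disjoint union of the connected components of all extension graphs of
words of length `m`. -/
def KT (X : Set (ℤ → A)) (m : ℕ) : Type _ :=
  Σ w : LW X m, (extGraph X w.1).ConnectedComponent

instance instFiniteLW [Finite A] (X : Set (ℤ → A)) (l : ℕ) : Finite (LW X l) := by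
  have h1 : {w : List A | w.length = l}.Finite := List.finite_length_eq A l
  have h2 : Finite {w : List A // w.length = l} := h1.to_subtype
  refine Finite.of_injective
    (fun w : LW X l => (⟨w.1, w.2.2⟩ : {w : List A // w.length = l})) ?_
  intro u v h
  have h' : u.1 = v.1 :=
    congrArg (Subtype.val : {w : List A // w.length = l} → List A) h
  exact Subtype.ext h'

instance instFiniteKT [Finite A] (X : Set (ℤ → A)) (m : ℕ) : Finite (KT X m) := by
  unfold KT
  infer_instance

lemma lwne {X : Set (ℤ → A)} {m : ℕ} (u : LW X (m + 1)) : u.1 ≠ [] :=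
  List.ne_nil_of_length_pos (by rw [u.2.2]; exact m.succ_pos)

/-- The component (in the graph of the length-`m` suffix) of the first letter. -/
def Cs (X : Set (ℤ → A)) (m : ℕ) (u : LW X (m + 1)) : KT X m :=
  ⟨⟨u.1.tail,
    ⟨by
      have h := u.2.1
      rw [← List.cons_head_tail (lwne u)] at h
      exact lang_cons h,
     by rw [List.length_tail, u.2.2]; rfl⟩⟩,
   SimpleGraph.connectedComponentMk _
     ⟨Sum.inl (u.1.head (lwne u)), by
        show (u.1.head (lwne u) :: u.1.tail) ∈ langOf X
        rw [List.cons_head_tail]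
        exact u.2.1⟩⟩

/-- The component (in the graph of the length-`m` prefix) of the last letter. -/
def Cp (X : Set (ℤ → A)) (m : ℕ) (u : LW X (m + 1)) : KT X m :=
  ⟨⟨u.1.dropLast,
    ⟨by
      have h := u.2.1
      rw [← List.dropLast_append_getLast (lwne u)] at h
      exact lang_concat h,
     by rw [List.length_dropLast, u.2.2]; rfl⟩⟩,
   SimpleGraph.connectedComponentMk _
     ⟨Sum.inr (u.1.getLast (lwne u)), by
        show (u.1.dropLast ++ [u.1.getLast (lwne u)]) ∈ langOf X
        rw [List.dropLast_append_getLast]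
        exact u.2.1⟩⟩

lemma KT_ext (X : Set (ℤ → A)) (m : ℕ) (w₁ w₂ : LW X m) (h : w₁.1 = w₂.1)
    (v₁ v₂ : A ⊕ A) (hv : v₁ = v₂) (p₁ : extVertex X w₁.1 v₁) (p₂ : extVertex X w₂.1 v₂) :
    (⟨w₁, SimpleGraph.connectedComponentMk _ ⟨v₁, p₁⟩⟩ : KT X m)
      = ⟨w₂, SimpleGraph.connectedComponentMk _ ⟨v₂, p₂⟩⟩ := by
  obtain ⟨l₁, q₁⟩ := w₁
  obtain ⟨l₂, q₂⟩ := w₂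
  dsimp only at h p₁ p₂
  subst h
  subst hv
  rfl

lemma KT_ext_adj (X : Set (ℤ → A)) (m : ℕ) (w₁ w₂ : LW X m) (h : w₁.1 = w₂.1) (a b : A)
    (p₁ : extVertex X w₁.1 (Sum.inl a)) (p₂ : extVertex X w₂.1 (Sum.inr b))
    (hab : (a :: (w₁.1 ++ [b])) ∈ langOf X) :
    (⟨w₁, SimpleGraph.connectedComponentMk _ ⟨Sum.inl a, p₁⟩⟩ : KT X m)
      = ⟨w₂, SimpleGraph.connectedComponentMk _ ⟨Sum.inr b, p₂⟩⟩ := by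
  obtain ⟨l₁, q₁⟩ := w₁
  obtain ⟨l₂, q₂⟩ := w₂
  dsimp only at h p₁ p₂ hab
  subst h
  have hadj : (extGraph X l₁).Adj ⟨Sum.inl a, p₁⟩ ⟨Sum.inr b, p₂⟩ :=
    Or.inl ⟨a, b, rfl, rfl, hab⟩
  exact congrArg (Sigma.mk _) (SimpleGraph.ConnectedComponent.sound hadj.reachable)

lemma KT_snd_eq {X : Set (ℤ → A)} {m : ℕ} (w : LW X m)
    (c₁ c₂ : (extGraph X w.1).ConnectedComponent)
    (h : (⟨w, c₁⟩ : KT X m) = ⟨w, c₂⟩) : c₁ = c₂ :=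
  eq_of_heq (Sigma.mk.inj_iff.mp h).2

lemma Cs_eq (X : Set (ℤ → A)) (m : ℕ) (u : LW X (m + 1)) (a : A) (w : List A)
    (h : u.1 = a :: w) (hw : w ∈ langOf X ∧ w.length = m) (hv : extVertex X w (Sum.inl a)) :
    Cs X m u = ⟨⟨w, hw⟩, SimpleGraph.connectedComponentMk _ ⟨Sum.inl a, hv⟩⟩ := by
  obtain ⟨ul, hu⟩ := u
  dsimp only at h
  subst h
  rfl

lemma Cp_eq (X : Set (ℤ → A)) (m : ℕ) (u : LW X (m + 1)) (b : A) (w : List A)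
    (h : u.1 = w ++ [b]) (hw : w ∈ langOf X ∧ w.length = m) (hv : extVertex X w (Sum.inr b)) :
    Cp X m u = ⟨⟨w, hw⟩, SimpleGraph.connectedComponentMk _ ⟨Sum.inr b, hv⟩⟩ := by
  obtain ⟨ul, hu⟩ := u
  dsimp only at h
  subst h
  exact KT_ext X m _ ⟨w, hw⟩ List.dropLast_concat _ _
    (by rw [List.getLast_concat]) _ _

lemma Cs_fst {X : Set (ℤ → A)} {m : ℕ} (u : LW X (m + 1)) : (Cs X m u).1.1 = u.1.tail := rfl

lemma Cp_fst {X : Set (ℤ → A)} {m : ℕ} (u : LW X (m + 1)) : (Cp X m u).1.1 = u.1.dropLast := rfl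

/-- The letter `a` is a left vertex of the graph of `k.1` lying in the component `k.2`. -/
def PL (X : Set (ℤ → A)) (m : ℕ) (k : KT X m) (a : A) : Prop :=
  ∃ h : extVertex X k.1.1 (Sum.inl a),
    SimpleGraph.connectedComponentMk _ (⟨Sum.inl a, h⟩ : {v // extVertex X k.1.1 v}) = k.2

/-- The letter `b` is a right vertex of the graph of `k.1` lying in the component `k.2`. -/
def PR (X : Set (ℤ → A)) (m : ℕ) (k : KT X m) (b : A) : Prop :=
  ∃ h : extVertex X k.1.1 (Sum.inr b),
    SimpleGraph.connectedComponentMk _ (⟨Sum.inr b, h⟩ : {v // extVertex X k.1.1 v}) = k.2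
lemma PL_lang {X : Set (ℤ → A)} {m : ℕ} {k : KT X m} {a : A} (h : PL X m k a) :
    (a :: k.1.1) ∈ langOf X :=
  h.elim fun hv _ => hv

lemma PR_lang {X : Set (ℤ → A)} {m : ℕ} {k : KT X m} {b : A} (h : PR X m k b) :
    (k.1.1 ++ [b]) ∈ langOf X :=
  h.elim fun hv _ => hv

lemma Cs_head {X : Set (ℤ → A)} {m : ℕ} (u : LW X (m + 1)) (k : KT X m) (h : Cs X m u = k) :
    u.1 = u.1.head (lwne u) :: k.1.1 := by
  have ht : u.1.tail = k.1.1 := congrArg (fun s : KT X m => s.1.1) h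
  rw [← ht, List.cons_head_tail]

lemma Cs_PL {X : Set (ℤ → A)} {m : ℕ} (u : LW X (m + 1)) (k : KT X m) (h : Cs X m u = k) :
    PL X m k (u.1.head (lwne u)) := by
  have hu1 := Cs_head u k h
  have hv : extVertex X k.1.1 (Sum.inl (u.1.head (lwne u))) := by
    show (u.1.head (lwne u) :: k.1.1) ∈ langOf X
    rw [← hu1]
    exact u.2.1
  refine ⟨hv, ?_⟩
  have h2 := Cs_eq X m u _ k.1.1 hu1 k.1.2 hv
  rw [h] at h2
  exact (KT_snd_eq k.1 _ _ h2.symm)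

lemma Cs_of_PL {X : Set (ℤ → A)} {m : ℕ} (k : KT X m) (a : A)
    (hv : extVertex X k.1.1 (Sum.inl a))
    (hc : SimpleGraph.connectedComponentMk _ (⟨Sum.inl a, hv⟩ : {v // extVertex X k.1.1 v}) = k.2)
    (hlen : (a :: k.1.1).length = m + 1) (hlang : (a :: k.1.1) ∈ langOf X) :
    Cs X m ⟨a :: k.1.1, hlang, hlen⟩ = k := by
  rw [Cs_eq X m _ a k.1.1 rfl k.1.2 hv]
  exact congrArg (Sigma.mk k.1) hc

lemma Cp_last {X : Set (ℤ → A)} {m : ℕ} (u : LW X (m + 1)) (k : KT X m) (h : Cp X m u = k) :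
    u.1 = k.1.1 ++ [u.1.getLast (lwne u)] := by
  have ht : u.1.dropLast = k.1.1 := congrArg (fun s : KT X m => s.1.1) h
  rw [← ht, List.dropLast_append_getLast]

lemma Cp_PR {X : Set (ℤ → A)} {m : ℕ} (u : LW X (m + 1)) (k : KT X m) (h : Cp X m u = k) :
    PR X m k (u.1.getLast (lwne u)) := by
  have hu1 := Cp_last u k h
  have hv : extVertex X k.1.1 (Sum.inr (u.1.getLast (lwne u))) := by
    show (k.1.1 ++ [u.1.getLast (lwne u)]) ∈ langOf X
    rw [← hu1]
    exact u.2.1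
  refine ⟨hv, ?_⟩
  have h2 := Cp_eq X m u _ k.1.1 hu1 k.1.2 hv
  rw [h] at h2
  exact (KT_snd_eq k.1 _ _ h2.symm)

lemma Cp_of_PR {X : Set (ℤ → A)} {m : ℕ} (k : KT X m) (b : A)
    (hv : extVertex X k.1.1 (Sum.inr b))
    (hc : SimpleGraph.connectedComponentMk _ (⟨Sum.inr b, hv⟩ : {v // extVertex X k.1.1 v}) = k.2)
    (hlen : (k.1.1 ++ [b]).length = m + 1) (hlang : (k.1.1 ++ [b]) ∈ langOf X) :
    Cp X m ⟨k.1.1 ++ [b], hlang, hlen⟩ = k := by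
  rw [Cp_eq X m _ b k.1.1 rfl k.1.2 hv]
  exact congrArg (Sigma.mk k.1) hc

lemma PL_iff_PR {X : Set (ℤ → A)} {m : ℕ} (k : KT X m) (a b : A)
    (hab : (a :: (k.1.1 ++ [b])) ∈ langOf X) : PL X m k a ↔ PR X m k b := by
  have hva : extVertex X k.1.1 (Sum.inl a) := by
    show (a :: k.1.1) ∈ langOf X
    have h2 : ((a :: k.1.1) ++ [b]) ∈ langOf X := by
      rw [List.cons_append]
      exact hab
    exact lang_concat h2
  have hvb : extVertex X k.1.1 (Sum.inr b) := by
    show (k.1.1 ++ [b]) ∈ langOf X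
    exact lang_cons hab
  have hadj : (extGraph X k.1.1).Adj ⟨Sum.inl a, hva⟩ ⟨Sum.inr b, hvb⟩ :=
    Or.inl ⟨a, b, rfl, rfl, hab⟩
  have hcc := SimpleGraph.ConnectedComponent.sound hadj.reachable
  constructor
  · rintro ⟨h, hc⟩
    refine ⟨hvb, ?_⟩
    rw [← hcc]
    exact hc
  · rintro ⟨h, hc⟩
    refine ⟨hva, ?_⟩
    rw [hcc]
    exact hc

section Fiber

variable [TopologicalSpace A] [DiscreteTopology A] [MeasurableSpace A] [BorelSpace A]
  [Fintype A]

lemma sum_fiber_Cs {X : Set (ℤ → A)} (μ : Measure (ℤ → A)) (m : ℕ) [Fintype (LW X (m + 1))]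
    (k : KT X m) :
    ∑ u ∈ Finset.univ.filter (fun u : LW X (m + 1) => Cs X m u = k), nu μ X u.1
      = ∑ a ∈ Finset.univ.filter (PL X m k), nu μ X (a :: k.1.1) := by
  refine Finset.sum_bij' (i := fun u _ => u.1.head (lwne u))
    (j := fun a ha => ⟨a :: k.1.1,
      PL_lang ((Finset.mem_filter.mp ha).2),
      by rw [List.length_cons, k.1.2.2]⟩) ?_ ?_ ?_ ?_ ?_
  · intro u hu
    rw [Finset.mem_filter]
    exact ⟨Finset.mem_univ _, Cs_PL u k (Finset.mem_filter.mp hu).2⟩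
  · intro a ha
    rw [Finset.mem_filter]
    obtain ⟨hv, hc⟩ := (Finset.mem_filter.mp ha).2
    exact ⟨Finset.mem_univ _, Cs_of_PL k a hv hc
      (by rw [List.length_cons, k.1.2.2]) (PL_lang ((Finset.mem_filter.mp ha).2))⟩
  · intro u hu
    exact Subtype.ext (Cs_head u k (Finset.mem_filter.mp hu).2).symm
  · intro a ha
    rfl
  · intro u hu
    exact congrArg (nu μ X) (Cs_head u k (Finset.mem_filter.mp hu).2)

lemma sum_fiber_Cp {X : Set (ℤ → A)} (μ : Measure (ℤ → A)) (m : ℕ) [Fintype (LW X (m + 1))]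
    (k : KT X m) :
    ∑ u ∈ Finset.univ.filter (fun u : LW X (m + 1) => Cp X m u = k), nu μ X u.1
      = ∑ b ∈ Finset.univ.filter (PR X m k), nu μ X (k.1.1 ++ [b]) := by
  refine Finset.sum_bij' (i := fun u _ => u.1.getLast (lwne u))
    (j := fun b hb => ⟨k.1.1 ++ [b],
      PR_lang ((Finset.mem_filter.mp hb).2),
      by rw [List.length_append, List.length_singleton, k.1.2.2]⟩) ?_ ?_ ?_ ?_ ?_
  · intro u hu
    rw [Finset.mem_filter]
    exact ⟨Finset.mem_univ _, Cp_PR u k (Finset.mem_filter.mp hu).2⟩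
  · intro b hb
    rw [Finset.mem_filter]
    obtain ⟨hv, hc⟩ := (Finset.mem_filter.mp hb).2
    exact ⟨Finset.mem_univ _, Cp_of_PR k b hv hc
      (by rw [List.length_append, List.length_singleton, k.1.2.2]) (PR_lang ((Finset.mem_filter.mp hb).2))⟩
  · intro u hu
    exact Subtype.ext (Cp_last u k (Finset.mem_filter.mp hu).2).symm
  · intro b hb
    simp [List.getLast_concat]
  · intro u hu
    exact congrArg (nu μ X) (Cp_last u k (Finset.mem_filter.mp hu).2)

lemma letter_rel {X : Set (ℤ → A)} (hX : IsSubshift X) (μ : Measure (ℤ → A))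
    [IsProbabilityMeasure μ]
    (hinv : ∀ B : Set (ℤ → A), MeasurableSet B → μ (shift ⁻¹' B) = μ B)
    (m : ℕ) (k : KT X m) :
    ∑ a ∈ Finset.univ.filter (PL X m k), nu μ X (a :: k.1.1)
      = ∑ b ∈ Finset.univ.filter (PR X m k), nu μ X (k.1.1 ++ [b]) := by
  have step1 : ∑ a ∈ Finset.univ.filter (PL X m k), nu μ X (a :: k.1.1)
      = ∑ a : A, ∑ b : A, (if PL X m k a then nu μ X (a :: (k.1.1 ++ [b])) else 0) := by
    rw [Finset.sum_filter]
    refine Finset.sum_congr rfl fun a _ => ?_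
    split_ifs with h
    · rw [nu_concat hX μ (a :: k.1.1)]
      refine Finset.sum_congr rfl fun b _ => ?_
      rw [List.cons_append]
    · simp
  have step2 : ∑ b ∈ Finset.univ.filter (PR X m k), nu μ X (k.1.1 ++ [b])
      = ∑ b : A, ∑ a : A, (if PR X m k b then nu μ X (a :: (k.1.1 ++ [b])) else 0) := by
    rw [Finset.sum_filter]
    refine Finset.sum_congr rfl fun b _ => ?_
    split_ifs with h
    · exact nu_cons hX μ hinv (k.1.1 ++ [b])
    · simp
  rw [step1, step2, Finset.sum_comm]
  refine Finset.sum_congr rfl fun b _ => Finset.sum_congr rfl fun a _ => ?_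
  by_cases hab : (a :: (k.1.1 ++ [b])) ∈ langOf X
  · by_cases hpl : PL X m k a
    · rw [if_pos hpl, if_pos ((PL_iff_PR k a b hab).mp hpl)]
    · rw [if_neg hpl, if_neg (fun h => hpl ((PL_iff_PR k a b hab).mpr h))]
  · rw [nu_nonlang μ hab]
    simp

lemma fiber_rel {X : Set (ℤ → A)} (hX : IsSubshift X) (μ : Measure (ℤ → A))
    [IsProbabilityMeasure μ]
    (hinv : ∀ B : Set (ℤ → A), MeasurableSet B → μ (shift ⁻¹' B) = μ B)
    (m : ℕ) [Fintype (LW X (m + 1))] (k : KT X m) :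
    ∑ u ∈ Finset.univ.filter (fun u : LW X (m + 1) => Cs X m u = k), nu μ X u.1
      = ∑ u ∈ Finset.univ.filter (fun u : LW X (m + 1) => Cp X m u = k), nu μ X u.1 := by
  rw [sum_fiber_Cs, sum_fiber_Cp]
  exact letter_rel hX μ hinv m k

end Fiber
section Const

variable [TopologicalSpace A] [DiscreteTopology A]

lemma lambda_const {X : Set (ℤ → A)} (hX : IsTransitiveSubshift X) (m : ℕ)
    (lam : KT X m → ℚ)
    (hrel : ∀ u : LW X (m + 1), lam (Cs X m u) = lam (Cp X m u)) :
    ∀ k k' : KT X m, lam k = lam k' := by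
  obtain ⟨x₀, hx₀, hd⟩ := hX.2
  have hWlen : ∀ (i : ℤ) (l : ℕ), (window x₀ i l) ∈ langOf X ∧ (window x₀ i l).length = l :=
    fun i l => ⟨mem_lang_window hx₀ i l, window_length x₀ i l⟩
  set Wd : ℤ → LW X (m + 1) := fun i => ⟨window x₀ i (m + 1), hWlen i (m + 1)⟩ with hWd
  have hchain : ∀ i : ℤ, Cs X m (Wd i) = Cp X m (Wd (i + 1)) := by
    intro i
    have h1 : (Wd i).1 = x₀ i :: window x₀ (i + 1) m := window_succ_left x₀ i m
    have h2 : (Wd (i + 1)).1 = window x₀ (i + 1) m ++ [x₀ (i + 1 + m)] :=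
      window_succ_right x₀ (i + 1) m
    rw [Cs_eq X m (Wd i) (x₀ i) (window x₀ (i+1) m) h1 (hWlen (i+1) m)
        (show (x₀ i :: window x₀ (i+1) m) ∈ langOf X by
          rw [← window_succ_left]; exact mem_lang_window hx₀ i (m+1)),
      Cp_eq X m (Wd (i+1)) (x₀ (i+1+m)) (window x₀ (i+1) m) h2 (hWlen (i+1) m)
        (show (window x₀ (i+1) m ++ [x₀ (i+1+m)]) ∈ langOf X by
          rw [← window_succ_right]; exact mem_lang_window hx₀ (i+1) (m+1))]
    refine KT_ext_adj X m _ _ rfl _ _ _ _ ?_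
    show (x₀ i :: (window x₀ (i+1) m ++ [x₀ (i+1+m)])) ∈ langOf X
    rw [← window_succ_right, ← window_succ_left]
    exact mem_lang_window hx₀ i (m+2)
  have hstep : ∀ i : ℤ, lam (Cp X m (Wd i)) = lam (Cp X m (Wd (i + 1))) := by
    intro i
    rw [← hchain i]
    exact (hrel (Wd i)).symm
  have hd2 : ∀ (j : ℕ) (i : ℤ), lam (Cp X m (Wd i)) = lam (Cp X m (Wd (i + j))) := by
    intro j
    induction j with
    | zero => intro i; simp
    | succ j ih =>
      intro i
      have harg : i + ((j + 1 : ℕ) : ℤ) = (i + j) + 1 := by push_cast; ring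
      rw [harg, ← hstep (i + j)]
      exact ih i
  have hcp : ∀ i j : ℤ, lam (Cp X m (Wd i)) = lam (Cp X m (Wd j)) := by
    intro i j
    rcases le_total i j with h | h
    · obtain ⟨d, rfl⟩ := Int.le.dest h
      exact hd2 d i
    · obtain ⟨d, rfl⟩ := Int.le.dest h
      exact (hd2 d j).symm
  have hval : ∀ k : KT X m, lam k = lam (Cp X m (Wd 0)) := by
    rintro ⟨w, c⟩
    induction c using SimpleGraph.ConnectedComponent.ind with
    | _ v =>
      obtain ⟨v0, hv0⟩ := v
      cases v0 with
      | inl a =>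
        have hlang : (a :: w.1) ∈ langOf X := hv0
        have hlen : (a :: w.1).length = m + 1 := by rw [List.length_cons, w.2.2]
        have h1 : Cs X m ⟨a :: w.1, hlang, hlen⟩
            = ⟨w, SimpleGraph.connectedComponentMk _ ⟨Sum.inl a, hv0⟩⟩ :=
          Cs_eq X m _ a w.1 rfl w.2 hv0
        obtain ⟨i, hocc⟩ := occurs_in_transitive_point hd hlang
        rw [hlen] at hocc
        have hWu : (⟨a :: w.1, hlang, hlen⟩ : LW X (m+1)) = Wd i := Subtype.ext hocc
        calc lam ⟨w, SimpleGraph.connectedComponentMk _ ⟨Sum.inl a, hv0⟩⟩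
            = lam (Cs X m ⟨a :: w.1, hlang, hlen⟩) := by rw [h1]
          _ = lam (Cp X m ⟨a :: w.1, hlang, hlen⟩) := hrel _
          _ = lam (Cp X m (Wd i)) := by rw [hWu]
          _ = lam (Cp X m (Wd 0)) := hcp i 0
      | inr b =>
        have hlang : (w.1 ++ [b]) ∈ langOf X := hv0
        have hlen : (w.1 ++ [b]).length = m + 1 := by
          rw [List.length_append, List.length_singleton, w.2.2]
        have h1 : Cp X m ⟨w.1 ++ [b], hlang, hlen⟩
            = ⟨w, SimpleGraph.connectedComponentMk _ ⟨Sum.inr b, hv0⟩⟩ :=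
          Cp_eq X m _ b w.1 rfl w.2 hv0
        obtain ⟨i, hocc⟩ := occurs_in_transitive_point hd hlang
        rw [hlen] at hocc
        have hWu : (⟨w.1 ++ [b], hlang, hlen⟩ : LW X (m+1)) = Wd i := Subtype.ext hocc
        calc lam ⟨w, SimpleGraph.connectedComponentMk _ ⟨Sum.inr b, hv0⟩⟩
            = lam (Cp X m ⟨w.1 ++ [b], hlang, hlen⟩) := by rw [h1]
          _ = lam (Cp X m (Wd i)) := by rw [hWu]
          _ = lam (Cp X m (Wd 0)) := hcp i 0
  intro k k'
  rw [hval k, hval k']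

end Const

end Lemma61

/-- **Lemma 6.1.** Let `X` be a transitive subshift and `μ` an invariant Borel probability
measure on `X`.  Then for each `n ≥ 1`,
`d(μ, n) ≤ p_X(n) − |K_(n−1)| + 1`, where `d(μ, n)` is the dimension of the `ℚ`-vector
space spanned by the measures of cylinders of words of length `n`, and `|K_(n−1)|` is the
total number of connected components of the extension graphs of words of length `n − 1`. -/
theorem dim_measures_le_complexity_sub_components
    {A : Type*} [Fintype A] [TopologicalSpace A] [DiscreteTopology A]
    [MeasurableSpace A] [BorelSpace A]
    (X : Set (ℤ → A)) (hX : IsTransitiveSubshift X)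
    (μ : Measure (ℤ → A)) (hprob : IsProbabilityMeasure μ) (hXfull : μ X = 1)
    (hinv : ∀ B : Set (ℤ → A), MeasurableSet B → μ (shift ⁻¹' B) = μ B)
    (n : ℕ) (hn : 1 ≤ n) :
    (Module.finrank ℚ ↥(Submodule.span ℚ
        {x : ℝ | ∃ u, u ∈ langOf X ∧ u.length = n ∧ x = (μ (cyl X u)).toReal}) : ℤ)
      ≤ (pcomplex X n : ℤ) - (totalComponents X (n - 1) : ℤ) + 1 := by
  classical
  obtain ⟨m, rfl⟩ : ∃ m : ℕ, n = m + 1 := ⟨n - 1, by omega⟩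
  have hSub : IsSubshift X := hX.1
  letI : Fintype (LW X (m + 1)) := Fintype.ofFinite _
  letI : Fintype (KT X m) := Fintype.ofFinite _
  -- The evaluation map on rational combinations of words of length `m+1`.
  let φ : (LW X (m+1) → ℚ) →ₗ[ℚ] ℝ :=
    { toFun := fun c => ∑ u : LW X (m+1), (c u : ℝ) * nu μ X u.1
      map_add' := fun c d => by
        simp only [Pi.add_apply, Rat.cast_add, add_mul]
        rw [Finset.sum_add_distrib]
      map_smul' := fun q c => by
        simp only [Pi.smul_apply, smul_eq_mul, Rat.cast_mul, RingHom.id_apply]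
        rw [Rat.smul_def, Finset.mul_sum]
        exact Finset.sum_congr rfl fun u _ => by ring }
  -- The component-relations map.
  let ψ : (KT X m → ℚ) →ₗ[ℚ] (LW X (m+1) → ℚ) :=
    { toFun := fun lam u => lam (Cs X m u) - lam (Cp X m u)
      map_add' := fun c d => by funext u; simp only [Pi.add_apply]; ring
      map_smul' := fun q c => by
        funext u
        simp only [Pi.smul_apply, smul_eq_mul, RingHom.id_apply]
        ring }
  have hrange : LinearMap.range φ = Submodule.span ℚ
      {x : ℝ | ∃ u, u ∈ langOf X ∧ u.length = m + 1 ∧ x = (μ (cyl X u)).toReal} := by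
    apply le_antisymm
    · rintro x ⟨c, rfl⟩
      apply Submodule.sum_mem
      intro u _
      have hx : ((c u : ℝ)) * nu μ X u.1 = (c u) • nu μ X u.1 := (Rat.smul_def _ _).symm
      rw [hx]
      exact Submodule.smul_mem _ _ (Submodule.subset_span ⟨u.1, u.2.1, u.2.2, rfl⟩)
    · rw [Submodule.span_le]
      rintro x ⟨u, hu, hlen, rfl⟩
      refine ⟨fun v => if v = ⟨u, hu, hlen⟩ then 1 else 0, ?_⟩
      show (∑ v : LW X (m+1),
        (((if v = (⟨u, hu, hlen⟩ : LW X (m+1)) then (1:ℚ) else 0) : ℚ) : ℝ) * nu μ X v.1)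
          = (μ (cyl X u)).toReal
      have hterm : ∀ v : LW X (m+1),
          (((if v = (⟨u, hu, hlen⟩ : LW X (m+1)) then (1:ℚ) else 0) : ℚ) : ℝ) * nu μ X v.1
            = if v = (⟨u, hu, hlen⟩ : LW X (m+1)) then nu μ X v.1 else 0 := by
        intro v
        split_ifs <;> simp
      rw [Finset.sum_congr rfl fun v _ => hterm v, Finset.sum_ite_eq' Finset.univ]
      simp [nu]
  have hψφ : LinearMap.range ψ ≤ LinearMap.ker φ := by
    rintro _ ⟨lam, rfl⟩
    rw [LinearMap.mem_ker]
    show ∑ u : LW X (m+1),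
        (((lam (Cs X m u) - lam (Cp X m u)) : ℚ) : ℝ) * nu μ X u.1 = 0
    have hsplit : ∀ u : LW X (m+1),
        (((lam (Cs X m u) - lam (Cp X m u)) : ℚ) : ℝ) * nu μ X u.1
          = (lam (Cs X m u) : ℝ) * nu μ X u.1 - (lam (Cp X m u) : ℝ) * nu μ X u.1 := by
      intro u
      push_cast
      ring
    rw [Finset.sum_congr rfl fun u _ => hsplit u, Finset.sum_sub_distrib]
    have hL : ∑ u : LW X (m+1), (lam (Cs X m u) : ℝ) * nu μ X u.1
        = ∑ k : KT X m, (lam k : ℝ) *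
            (∑ u ∈ Finset.univ.filter (fun u : LW X (m+1) => Cs X m u = k), nu μ X u.1) := by
      rw [← Finset.sum_fiberwise Finset.univ (fun u : LW X (m+1) => Cs X m u)
            (fun u => (lam (Cs X m u) : ℝ) * nu μ X u.1)]
      refine Finset.sum_congr rfl fun k _ => ?_
      rw [Finset.mul_sum]
      refine Finset.sum_congr rfl fun u hu => ?_
      rw [(Finset.mem_filter.mp hu).2]
    have hR : ∑ u : LW X (m+1), (lam (Cp X m u) : ℝ) * nu μ X u.1
        = ∑ k : KT X m, (lam k : ℝ) *
            (∑ u ∈ Finset.univ.filter (fun u : LW X (m+1) => Cp X m u = k), nu μ X u.1) := by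
      rw [← Finset.sum_fiberwise Finset.univ (fun u : LW X (m+1) => Cp X m u)
            (fun u => (lam (Cp X m u) : ℝ) * nu μ X u.1)]
      refine Finset.sum_congr rfl fun k _ => ?_
      rw [Finset.mul_sum]
      refine Finset.sum_congr rfl fun u hu => ?_
      rw [(Finset.mem_filter.mp hu).2]
    rw [hL, hR, ← Finset.sum_sub_distrib]
    refine Finset.sum_eq_zero fun k _ => ?_
    rw [fiber_rel hSub μ hinv m k]
    ring
  -- rank computations
  have hφrank := LinearMap.finrank_range_add_finrank_ker φ
  have hψrank := LinearMap.finrank_range_add_finrank_ker ψ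
  rw [Module.finrank_fintype_fun_eq_card] at hφrank hψrank
  obtain ⟨x₀, hx₀, -⟩ := hX.2
  have hk₀ : KT X m :=
    Cs X m ⟨window x₀ 0 (m+1), mem_lang_window hx₀ 0 (m+1), window_length x₀ 0 (m+1)⟩
  have hkerψ : Module.finrank ℚ (LinearMap.ker ψ) ≤ 1 := by
    have hone : (fun _ => 1 : KT X m → ℚ) ≠ 0 := by
      intro h
      have := congrFun h hk₀
      norm_num at this
    have hle : LinearMap.ker ψ ≤ Submodule.span ℚ {(fun _ => 1 : KT X m → ℚ)} := by
      intro lam hlam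
      rw [LinearMap.mem_ker] at hlam
      have hrel : ∀ u : LW X (m+1), lam (Cs X m u) = lam (Cp X m u) := by
        intro u
        have h0 : lam (Cs X m u) - lam (Cp X m u) = 0 := congrFun hlam u
        exact sub_eq_zero.mp h0
      have hconst := lambda_const hX m lam hrel
      rw [Submodule.mem_span_singleton]
      refine ⟨lam hk₀, ?_⟩
      funext k
      simp only [Pi.smul_apply, smul_eq_mul, mul_one]
      exact (hconst k hk₀).symm
    calc Module.finrank ℚ (LinearMap.ker ψ)
        ≤ Module.finrank ℚ (Submodule.span ℚ {(fun _ => 1 : KT X m → ℚ)}) :=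
          Submodule.finrank_mono hle
      _ = 1 := finrank_span_singleton hone
  have hrkle : Module.finrank ℚ (LinearMap.range ψ) ≤ Module.finrank ℚ (LinearMap.ker φ) :=
    Submodule.finrank_mono hψφ
  have hcardK : totalComponents X m = Fintype.card (KT X m) := by
    have h2 : totalComponents X m = Nat.card (KT X m) := rfl
    rw [h2, Nat.card_eq_fintype_card]
  have hcardL : pcomplex X (m+1) = Fintype.card (LW X (m+1)) := by
    have h1 : pcomplex X (m+1) = Nat.card (LW X (m+1)) :=
      (Nat.card_coe_set_eq {w : List A | w ∈ langOf X ∧ w.length = m + 1}).symm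
    rw [h1, Nat.card_eq_fintype_card]
  have hm1 : m + 1 - 1 = m := rfl
  rw [← hrange, hm1, hcardK, hcardL]
  omega

end SAdicPaper
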